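/- Let V be a standard Borel space and let (X_J)_{J∈𝒥} be a V-valued exchangeable array, realized canonically on Ω = V^𝒥 with law P, exchangeable σ-algebra ℰ and tail σ-algebra 𝒢. Then for every A ∈ ℰ there exists B ∈ 𝒢 such that P(A Δ B) = 0, where A Δ B denotes the symmetric difference; in other words, ℰ and 𝒢 coincide up to P-null sets. -/

import Mathlib

open MeasureTheory Filter Topology

noncomputable section

/-- The index set `𝒥`: nonempty subsets of `ℕ` of cardinality at most `k`. -/
abbrev Idx (k : ℕ) := {J : Finset ℕ // J.Nonempty ∧ J.card ≤ k}

/-- Action of a permutation of `ℕ` on the index set: `J ↦ τ(J)`. -/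
def permIdx (k : ℕ) (τ : Equiv.Perm ℕ) (J : Idx k) : Idx k :=
  ⟨J.1.image τ, J.2.1.image τ, by
    rw [Finset.card_image_of_injective _ τ.injective]; exact J.2.2⟩

/-- Action of a permutation on the canonical space `V ^ 𝒥`. -/
def permAct (k : ℕ) (V : Type*) (τ : Equiv.Perm ℕ) (ω : Idx k → V) : Idx k → V :=
  fun J => ω (permIdx k τ J)

/-- Exchangeability of the canonical array. -/
def IsExchangeable (k : ℕ) {V : Type*} [MeasurableSpace V] (P : Measure (Idx k → V)) : Prop :=
  ∀ τ : Equiv.Perm ℕ, {x | τ x ≠ x}.Finite → Measure.map (permAct k V τ) P = P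

/-- The σ-algebra `ℰ_N` of measurable sets invariant under all permutations of `{0, …, N-1}`. -/
def exchSigmaN (k : ℕ) (V : Type*) [MeasurableSpace V] (N : ℕ) :
    MeasurableSpace (Idx k → V) where
  MeasurableSet' A := MeasurableSet A ∧
    ∀ τ : Equiv.Perm ℕ, (∀ x, N ≤ x → τ x = x) → permAct k V τ ⁻¹' A = A
  measurableSet_empty := ⟨MeasurableSet.empty, fun _ _ => by simp⟩
  measurableSet_compl := fun A hA => ⟨hA.1.compl, fun τ hτ => by
    rw [Set.preimage_compl, hA.2 τ hτ]⟩
  measurableSet_iUnion := fun f hf => ⟨MeasurableSet.iUnion fun i => (hf i).1,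
    fun τ hτ => by
      rw [Set.preimage_iUnion]
      exact Set.iUnion_congr fun i => (hf i).2 τ hτ⟩

/-- The exchangeable σ-algebra `ℰ = ⋂_N ℰ_N`. -/
def exchSigma (k : ℕ) (V : Type*) [MeasurableSpace V] : MeasurableSpace (Idx k → V) :=
  ⨅ N : ℕ, exchSigmaN k V N

/-- The `N`-fold shift `S^N` on the index set: `{γ₁,…,γ_l} ↦ {γ₁+N,…,γ_l+N}`. -/
def shiftIdx (k : ℕ) (N : ℕ) (J : Idx k) : Idx k :=
  ⟨J.1.image (· + N), J.2.1.image _, by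
    rw [Finset.card_image_of_injective _ (add_left_injective N)]; exact J.2.2⟩

/-- The σ-algebra `𝒢_N = σ(X_{S^N(J)} : J ∈ 𝒥)`. -/
def tailSigmaN (k : ℕ) (V : Type*) [MeasurableSpace V] (N : ℕ) :
    MeasurableSpace (Idx k → V) :=
  MeasurableSpace.comap (fun ω : Idx k → V => fun J => ω (shiftIdx k N J)) inferInstance

/-- The tail σ-algebra `𝒢 = ⋂_{N ≥ 1} 𝒢_N`. -/
def tailSigma (k : ℕ) (V : Type*) [MeasurableSpace V] : MeasurableSpace (Idx k → V) :=
  ⨅ N : ℕ, tailSigmaN k V (N + 1)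

section Aux

variable (k : ℕ) (V : Type*) [MeasurableSpace V]

variable (k : ℕ) (V : Type*) [MeasurableSpace V]

def cylSigma (n : ℕ) : MeasurableSpace (Idx k → V) :=
  ⨆ (J : Idx k) (_ : J.1 ⊆ Finset.range n),
    MeasurableSpace.comap (fun ω : Idx k → V => ω J) inferInstance

lemma cylSigma_le_pi (n : ℕ) : cylSigma k V n ≤ MeasurableSpace.pi :=
  iSup_le fun J => iSup_le fun _ => (measurable_pi_apply J).comap_le

lemma cylSigma_mono {m n : ℕ} (h : m ≤ n) : cylSigma k V m ≤ cylSigma k V n :=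
  iSup_le fun J => iSup_le fun hJ =>
    le_iSup₂_of_le J (hJ.trans (Finset.range_subset_range.2 h)) le_rfl

def cylAlgebra : Set (Set (Idx k → V)) := {A | ∃ n, MeasurableSet[cylSigma k V n] A}

lemma isSetAlgebra_cylAlgebra : IsSetAlgebra (cylAlgebra k V) where
  empty_mem := ⟨0, @MeasurableSet.empty _ (cylSigma k V 0)⟩
  compl_mem := fun s hs => by
    obtain ⟨n, hn⟩ := hs; exact ⟨n, hn.compl⟩
  union_mem := fun s t hs ht => by
    obtain ⟨n, hn⟩ := hs; obtain ⟨m, hm⟩ := ht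
    exact ⟨max n m, (cylSigma_mono k V (le_max_left n m) _ hn).union
      (cylSigma_mono k V (le_max_right n m) _ hm)⟩

lemma cylPi_eq_generateFrom :
    (MeasurableSpace.pi : MeasurableSpace (Idx k → V)) =
      MeasurableSpace.generateFrom (cylAlgebra k V) := by
  refine le_antisymm ?_ (MeasurableSpace.generateFrom_le fun t ht => by
    obtain ⟨n, hn⟩ := ht; exact cylSigma_le_pi k V n _ hn)
  have key : ∀ n, cylSigma k V n ≤ MeasurableSpace.generateFrom (cylAlgebra k V) :=
    fun n s hs => MeasurableSpace.measurableSet_generateFrom ⟨n, hs⟩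
  refine iSup_le fun J => ?_
  refine le_trans ?_ (key (J.1.sup id + 1))
  exact le_iSup₂_of_le J
    (fun x hx => Finset.mem_range.2 (Nat.lt_succ_of_le (Finset.le_sup (f := id) hx))) le_rfl

lemma tailSigmaN_le_pi (N : ℕ) : tailSigmaN k V N ≤ MeasurableSpace.pi :=
  Measurable.comap_le (measurable_pi_lambda _ fun J => measurable_pi_apply _)

lemma shiftIdx_add (a b : ℕ) (J : Idx k) :
    shiftIdx k (a + b) J = shiftIdx k b (shiftIdx k a J) := by
  apply Subtype.ext
  simp only [shiftIdx, Finset.image_image]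
  apply Finset.image_congr
  intro x _
  simp [Function.comp, add_assoc]

lemma tailSigmaN_antitone {a b : ℕ} (hab : a ≤ b) :
    tailSigmaN k V b ≤ tailSigmaN k V a := by
  have hco : (fun ω : Idx k → V => fun J => ω (shiftIdx k b J)) =
      (fun η : Idx k → V => fun J => η (shiftIdx k (b - a) J)) ∘
        (fun ω : Idx k → V => fun J => ω (shiftIdx k a J)) := by
    funext ω J
    simp only [Function.comp]
    congr 1
    rw [← shiftIdx_add]
    congr 1
    omega
  rw [tailSigmaN, hco, ← MeasurableSpace.comap_comp]
  exact MeasurableSpace.comap_mono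
    (Measurable.comap_le (measurable_pi_lambda _ fun J => measurable_pi_apply _))

def swapPerm (n : ℕ) : Equiv.Perm ℕ :=
  Function.Involutive.toPerm
    (fun x => if x < n then x + n else if x < 2 * n then x - n else x)
    (by intro x; dsimp only; split_ifs <;> omega)

lemma swapPerm_apply_lt {n x : ℕ} (h : x < n) : swapPerm n x = x + n := by
  show (if x < n then x + n else if x < 2 * n then x - n else x) = x + n
  simp [h]

lemma swapPerm_fix {n x : ℕ} (h : 2 * n ≤ x) : swapPerm n x = x := by
  show (if x < n then x + n else if x < 2 * n then x - n else x) = x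
  split_ifs <;> omega

lemma swapPerm_support_finite (n : ℕ) : {x | swapPerm n x ≠ x}.Finite :=
  Set.Finite.subset (Set.finite_Iio (2 * n)) fun x hx => by
    by_contra hc
    exact hx (swapPerm_fix (by simpa using hc))

lemma permIdx_swap (n : ℕ) (J : Idx k) (hJ : J.1 ⊆ Finset.range n) :
    permIdx k (swapPerm n) J = shiftIdx k n J := by
  apply Subtype.ext
  simp only [permIdx, shiftIdx]
  apply Finset.image_congr
  intro x hx
  exact swapPerm_apply_lt (Finset.mem_range.1 (hJ hx))

lemma measurable_permAct (τ : Equiv.Perm ℕ) : Measurable (permAct k V τ) :=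
  measurable_pi_lambda _ fun J => measurable_pi_apply _

lemma comap_permAct_cyl_le (n : ℕ) :
    MeasurableSpace.comap (permAct k V (swapPerm n)) (cylSigma k V n) ≤ tailSigmaN k V n := by
  rw [cylSigma, MeasurableSpace.comap_iSup]
  refine iSup_le fun J => ?_
  rw [MeasurableSpace.comap_iSup]
  refine iSup_le fun hJ => ?_
  rw [MeasurableSpace.comap_comp]
  have hco : ((fun ω : Idx k → V => ω J) ∘ permAct k V (swapPerm n)) =
      (fun η : Idx k → V => η J) ∘ (fun ω : Idx k → V => fun J' => ω (shiftIdx k n J')) := by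
    funext ω
    simp [permAct, permIdx_swap k n J hJ, Function.comp]
  rw [hco, ← MeasurableSpace.comap_comp]
  exact MeasurableSpace.comap_mono (measurable_pi_apply J).comap_le


lemma step (P : Measure (Idx k → V)) [IsProbabilityMeasure P] (hP : IsExchangeable k P)
    (A : Set (Idx k → V)) (hA : MeasurableSet[exchSigma k V] A) (N : ℕ) (ε : ℝ) (hε : 0 < ε) :
    ∃ B, MeasurableSet[tailSigmaN k V (N + 1)] B ∧ P (symmDiff A B) < ENNReal.ofReal ε := by
  have hAall : ∀ M, MeasurableSet[exchSigmaN k V M] A :=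
    MeasurableSpace.measurableSet_iInf.1 hA
  have hAmeas : MeasurableSet A := (hAall 0).1
  have hdense := Measure.MeasureDense.of_generateFrom_isSetAlgebra_finite (μ := P)
    (isSetAlgebra_cylAlgebra k V) (cylPi_eq_generateFrom k V)
  obtain ⟨t, ⟨n, htn⟩, ht⟩ := hdense.approx A hAmeas (measure_ne_top P A) ε hε
  set n' := max n (N + 1) with hn'
  have htn' : MeasurableSet[cylSigma k V n'] t := cylSigma_mono k V (le_max_left _ _) _ htn
  set τ := swapPerm n' with hτ
  have htmeas : MeasurableSet t := cylSigma_le_pi k V n' _ htn'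
  have hAinv : permAct k V τ ⁻¹' A = A :=
    (hAall (2 * n')).2 τ (fun x hx => swapPerm_fix hx)
  refine ⟨permAct k V τ ⁻¹' t, ?_, ?_⟩
  · exact tailSigmaN_antitone k V (le_max_right n (N + 1)) _
      (comap_permAct_cyl_le k V n' _ ⟨t, htn', rfl⟩)
  · have hsd : symmDiff A (permAct k V τ ⁻¹' t) = permAct k V τ ⁻¹' (symmDiff A t) := by
      conv_lhs => rw [← hAinv]
      simp [Set.symmDiff_def, Set.preimage_diff, Set.preimage_union]
    rw [hsd, ← Measure.map_apply (measurable_permAct k V τ) (hAmeas.symmDiff htmeas),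
      hP τ (swapPerm_support_finite n')]
    exact ht



end Aux

/-- for an exchangeable array realized canonically with law `P`, every set in
the exchangeable σ-algebra `ℰ` coincides up to a `P`-null symmetric difference with a set in the
tail σ-algebra `𝒢`. -/
theorem statement2 (k : ℕ) (V : Type*) [MeasurableSpace V] [StandardBorelSpace V]
    (P : Measure (Idx k → V)) [IsProbabilityMeasure P] (hP : IsExchangeable k P) :
    ∀ A : Set (Idx k → V), MeasurableSet[exchSigma k V] A →
      ∃ B : Set (Idx k → V), MeasurableSet[tailSigma k V] B ∧ P (symmDiff A B) = 0 := by

  intro A hA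
  have hstep : ∀ m : ℕ, ∃ B, MeasurableSet[tailSigmaN k V (m + 1)] B ∧
      P (symmDiff A B) < ENNReal.ofReal ((1 / 2 : ℝ) ^ m) :=
    fun m => step k V P hP A hA m _ (by positivity)
  choose Bm hBm hPB using hstep
  have hbound : ∀ m, P (symmDiff A (Bm m)) ≤ (2⁻¹ : ENNReal) ^ m := by
    intro m
    refine le_of_lt (lt_of_lt_of_le (hPB m) (le_of_eq ?_))
    rw [ENNReal.ofReal_pow (by norm_num : (0:ℝ) ≤ 1 / 2)]
    congr 1
    rw [one_div, ENNReal.ofReal_inv_of_pos two_pos, ENNReal.ofReal_ofNat]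
  have htends : Tendsto (fun m : ℕ => (2⁻¹ : ENNReal) ^ m) atTop (𝓝 0) :=
    ENNReal.tendsto_pow_atTop_nhds_zero_of_lt_one (by norm_num)
  set U : ℕ → Set (Idx k → V) := fun M => ⋃ j : ℕ, Bm (M + j) with hU
  have hUanti : ∀ {a b : ℕ}, a ≤ b → U b ⊆ U a := by
    intro a b hab
    refine Set.iUnion_subset fun j => ?_
    have h : b + j = a + (b - a + j) := by omega
    rw [h]
    exact Set.subset_iUnion (fun i => Bm (a + i)) _
  refine ⟨⋂ M, U M, ?_, ?_⟩
  · rw [tailSigma, MeasurableSpace.measurableSet_iInf]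
    intro N
    have hrepr : ⋂ M, U M = ⋂ M, U (M + N) := by
      apply Set.Subset.antisymm
      · exact Set.subset_iInter fun M => Set.iInter_subset U (M + N)
      · exact Set.subset_iInter fun M => (Set.iInter_subset _ M).trans (hUanti (by omega))
    rw [hrepr]
    refine MeasurableSet.iInter fun M => ?_
    refine MeasurableSet.iUnion fun j => ?_
    exact tailSigmaN_antitone k V (by omega) _ (hBm (M + N + j))
  · have hdiff1 : P (A \ ⋂ M, U M) = 0 := by
      rw [Set.diff_iInter]
      refine measure_iUnion_null fun M => ?_
      have hle : ∀ j : ℕ, P (A \ U M) ≤ (2⁻¹ : ENNReal) ^ (M + j) := by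
        intro j
        refine le_trans (measure_mono ?_) (hbound (M + j))
        intro x hx
        exact Set.mem_symmDiff.2 (Or.inl ⟨hx.1, fun hmem => hx.2 (Set.mem_iUnion.2 ⟨j, hmem⟩)⟩)
      have htends' : Tendsto (fun j : ℕ => (2⁻¹ : ENNReal) ^ (M + j)) atTop (𝓝 0) := by
        simp_rw [pow_add]
        simpa using ENNReal.Tendsto.const_mul htends
          (Or.inr (by simp [ENNReal.pow_ne_top, ENNReal.inv_ne_top]))
      exact le_antisymm (ge_of_tendsto' htends' hle) (zero_le)
    have hdiff2 : P ((⋂ M, U M) \ A) = 0 := by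
      have hle : ∀ M : ℕ, P ((⋂ M', U M') \ A) ≤ (2⁻¹ : ENNReal) ^ M * 2 := by
        intro M
        have hsub : (⋂ M', U M') \ A ⊆ ⋃ j, (Bm (M + j) \ A) := by
          intro x hx
          obtain ⟨j, hj⟩ := Set.mem_iUnion.1 ((Set.iInter_subset U M) hx.1)
          exact Set.mem_iUnion.2 ⟨j, hj, hx.2⟩
        refine le_trans (measure_mono hsub) (le_trans (measure_iUnion_le _) ?_)
        have hterm : ∀ j : ℕ, P (Bm (M + j) \ A) ≤ (2⁻¹ : ENNReal) ^ (M + j) := fun j =>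
          le_trans (measure_mono fun x hx => Set.mem_symmDiff.2 (Or.inr ⟨hx.1, hx.2⟩))
            (hbound (M + j))
        refine le_trans (ENNReal.tsum_le_tsum hterm) (le_of_eq ?_)
        calc ∑' j : ℕ, (2⁻¹ : ENNReal) ^ (M + j)
            = (2⁻¹ : ENNReal) ^ M * ∑' j : ℕ, (2⁻¹ : ENNReal) ^ j := by
              simp_rw [pow_add, ENNReal.tsum_mul_left]
          _ = (2⁻¹ : ENNReal) ^ M * 2 := by
              rw [ENNReal.tsum_geometric]
              congr 1
              simp [ENNReal.one_sub_inv_two]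
      have htends' : Tendsto (fun M : ℕ => (2⁻¹ : ENNReal) ^ M * 2) atTop (𝓝 0) := by
        simpa using ENNReal.Tendsto.mul_const htends (Or.inr (by norm_num))
      exact le_antisymm (ge_of_tendsto' htends' hle) (zero_le)
    have hfin : P (symmDiff A (⋂ M, U M)) ≤ P (A \ ⋂ M, U M) + P ((⋂ M, U M) \ A) := by
      rw [Set.symmDiff_def]
      exact measure_union_le _ _
    rw [hdiff1, hdiff2, add_zero] at hfin
    exact le_antisymm hfin (zero_le)


end
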